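/- arXiv:2108.10725 — 8 statements merged into one kernel-verified Lean document; each statement's English description precedes it below -/
import Mathlib

section
/- Let σ, ν, μ be Minkowski velocities with ⟨ν,σ⟩ > 0, ⟨σ,μ⟩ > 0 and ⟨ν,μ⟩ > 0. Set ω₁₀ := ω(ν,σ), ω₀₂ := ω(σ,μ), ω₁₂ := ω(ν,μ) and γ₁₀ := 1/√(1 + ⟨ω₁₀,ω₁₀⟩/c²). If γ₁₀ − ⟨ω₁₀,ω₀₂⟩/c² ≠ 0, then ω₁₂ = ω₁₀ + (ω₀₂ + σ)/(γ₁₀ − ⟨ω₁₀,ω₀₂⟩/c²) − σ/γ₁₀. -/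
noncomputable section

/-- Minkowski bilinear form on ℝ⁴ with signature +−−−. -/
def mink (u v : Fin 4 → ℝ) : ℝ := u 0 * v 0 - u 1 * v 1 - u 2 * v 2 - u 3 * v 3

/-- Canonical (Oziewicz–Świerk–Bolós) binary relative velocity of μ with respect to ν. -/
def omegaBin (c : ℝ) (ν μ : Fin 4 → ℝ) : Fin 4 → ℝ := (c ^ 2 / mink ν μ) • μ - ν

lemma mink_expand (a b : ℝ) (x y u v : Fin 4 → ℝ) :
    mink (a • x - y) (b • u - v) =
      a * b * mink x u - a * mink x v - b * mink y u + mink y v := by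
  simp only [mink, Pi.sub_apply, Pi.smul_apply, smul_eq_mul]; ring

lemma mink_comm (u v : Fin 4 → ℝ) : mink u v = mink v u := by
  simp only [mink]; ring

theorem binary_composition (c : ℝ) (hc : 0 < c) (σ ν μ : Fin 4 → ℝ)
    (hσ : mink σ σ = c ^ 2) (hν : mink ν ν = c ^ 2) (hμ : mink μ μ = c ^ 2)
    (hνσ : 0 < mink ν σ) (hσμ : 0 < mink σ μ) (hνμ : 0 < mink ν μ)
    (ω10 ω02 ω12 : Fin 4 → ℝ)
    (hω10 : ω10 = omegaBin c ν σ) (hω02 : ω02 = omegaBin c σ μ)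
    (hω12 : ω12 = omegaBin c ν μ)
    (γ10 : ℝ) (hγ10 : γ10 = 1 / Real.sqrt (1 + mink ω10 ω10 / c ^ 2))
    (hden : γ10 - mink ω10 ω02 / c ^ 2 ≠ 0) :
    ω12 = ω10 + (γ10 - mink ω10 ω02 / c ^ 2)⁻¹ • (ω02 + σ) - γ10⁻¹ • σ := by
  have hc2 : (c : ℝ) ^ 2 ≠ 0 := by positivity
  have hs : mink ν σ ≠ 0 := ne_of_gt hνσ
  have hm : mink σ μ ≠ 0 := ne_of_gt hσμ
  have hn : mink ν μ ≠ 0 := ne_of_gt hνμ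
  have h10 : mink ω10 ω10 = c ^ 6 / (mink ν σ) ^ 2 - c ^ 2 := by
    rw [hω10, omegaBin, mink_expand, hσ, hν, mink_comm σ ν]
    field_simp
    ring
  have h1 : 1 + mink ω10 ω10 / c ^ 2 = (c ^ 2 / mink ν σ) ^ 2 := by
    rw [h10]; field_simp; ring
  have hγ : γ10 = mink ν σ / c ^ 2 := by
    rw [hγ10, h1, Real.sqrt_sq (by positivity)]
    rw [one_div_div]
  have h02 : mink ω10 ω02 = mink ν σ - c ^ 2 * mink ν μ / mink σ μ := by
    rw [hω10, hω02, omegaBin, omegaBin, mink_expand, hσ]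
    field_simp
    ring
  have hdeq : γ10 - mink ω10 ω02 / c ^ 2 = mink ν μ / mink σ μ := by
    rw [hγ, h02]; field_simp; ring
  subst hω12; subst hω02; subst hω10
  rw [hdeq, hγ]
  funext i
  simp only [omegaBin, Pi.add_apply, Pi.sub_apply, Pi.smul_apply, smul_eq_mul]
  field_simp
  ring
end
end

section
/- Let σ be a Minkowski velocity and let ω, ξ ∈ ℝ⁴ satisfy ⟨ω,σ⟩ = 0, ⟨ξ,σ⟩ = 0, −c² < ⟨ω,ω⟩ ≤ 0, −c² < ⟨ξ,ξ⟩ ≤ 0 and ⟨ω,ξ⟩ < c². Put γ_ξ := 1/√(1 + ⟨ξ,ξ⟩/c²), γ_ω := 1/√(1 + ⟨ω,ω⟩/c²), ν := γ_ω·(ω + σ), ζ := γ_ξ·(ξ + σ), and μ := La(σ,ζ)ν. Then (c²/⟨μ,σ⟩)·μ − σ = [ω + ξ + (γ_ξ/(γ_ξ+1))·((⟨ξ,ξ⟩/c²)·ω − (⟨ω,ξ⟩/c²)·ξ)] / (1 − ⟨ω,ξ⟩/c²). (Oziewicz's theorem: the 4D composition of the ternary velocity ξ with the binary velocity ω has the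 form of Einstein's 3D velocity addition.) -/
noncomputable section

/-- Active covariant Lorentz boost determined by Minkowski velocities σ, ζ. -/
def La (c : ℝ) (σ ζ ν : Fin 4 → ℝ) : Fin 4 → ℝ :=
  ν - (mink ν (ζ + σ) / mink σ (ζ + σ)) • (ζ + σ) + (2 * mink ν σ / c ^ 2) • ζ

lemma mink_add_left (u v w : Fin 4 → ℝ) : mink (u + v) w = mink u w + mink v w := by
  simp [mink]; ring

lemma mink_add_right (u v w : Fin 4 → ℝ) : mink u (v + w) = mink u v + mink u w := by
  simp [mink]; ring

lemma mink_smul_left (a : ℝ) (u v : Fin 4 → ℝ) : mink (a • u) v = a * mink u v := by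
  simp [mink]; ring

lemma mink_smul_right (a : ℝ) (u v : Fin 4 → ℝ) : mink u (a • v) = a * mink u v := by
  simp [mink]; ring

theorem oziewicz_einstein_addition (c : ℝ) (hc : 0 < c) (σ : Fin 4 → ℝ)
    (hσ : mink σ σ = c ^ 2) (ω ξ : Fin 4 → ℝ)
    (hωσ : mink ω σ = 0) (hξσ : mink ξ σ = 0)
    (hω1 : -c ^ 2 < mink ω ω) (hω2 : mink ω ω ≤ 0)
    (hξ1 : -c ^ 2 < mink ξ ξ) (hξ2 : mink ξ ξ ≤ 0)
    (hωξ : mink ω ξ < c ^ 2)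
    (γξ γω : ℝ)
    (hγξ : γξ = 1 / Real.sqrt (1 + mink ξ ξ / c ^ 2))
    (hγω : γω = 1 / Real.sqrt (1 + mink ω ω / c ^ 2))
    (ν ζ μ : Fin 4 → ℝ)
    (hν : ν = γω • (ω + σ)) (hζ : ζ = γξ • (ξ + σ))
    (hμ : μ = La c σ ζ ν) :
    (c ^ 2 / mink μ σ) • μ - σ =
      (1 - mink ω ξ / c ^ 2)⁻¹ •
        (ω + ξ + (γξ / (γξ + 1)) •
          ((mink ξ ξ / c ^ 2) • ω - (mink ω ξ / c ^ 2) • ξ)) := by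
  subst hμ hν hζ
  have hc2 : (c : ℝ) ^ 2 ≠ 0 := by positivity
  have hb : 0 < 1 + mink ξ ξ / c ^ 2 := by
    have : -1 < mink ξ ξ / c ^ 2 := by
      rw [lt_div_iff₀ (by positivity)]; nlinarith
    linarith
  have ha : 0 < 1 + mink ω ω / c ^ 2 := by
    have : -1 < mink ω ω / c ^ 2 := by
      rw [lt_div_iff₀ (by positivity)]; nlinarith
    linarith
  have hγξpos : 0 < γξ := by rw [hγξ]; positivity
  have hγωpos : 0 < γω := by rw [hγω]; positivity
  have hγξ1 : γξ + 1 ≠ 0 := by positivity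
  have hcb : (0:ℝ) < c ^ 2 + mink ξ ξ := by nlinarith
  have hg2 : γξ ^ 2 * (c ^ 2 + mink ξ ξ) = c ^ 2 := by
    rw [hγξ, div_pow, one_pow, Real.sq_sqrt hb.le]
    field_simp
  have hγωne : γω ≠ 0 := hγωpos.ne'
  have hγξne : γξ ≠ 0 := hγξpos.ne'
  have hcd : c ^ 2 - mink ω ξ ≠ 0 := by nlinarith
  have hs : (0 : ℝ) < 1 - mink ω ξ / c ^ 2 := by
    have : mink ω ξ / c ^ 2 < 1 := by rw [div_lt_one (by positivity)]; exact hωξ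
    linarith
  have hσω : mink σ ω = 0 := by rw [mink_comm]; exact hωσ
  have hσξ : mink σ ξ = 0 := by rw [mink_comm]; exact hξσ
  have h1 : mink σ (γξ • (ξ + σ) + σ) = (γξ + 1) * c ^ 2 := by
    simp [mink_add_right, mink_smul_right, hσξ, hσ]; ring
  have h2 : mink (γω • (ω + σ)) (γξ • (ξ + σ) + σ) =
      γω * (γξ * mink ω ξ + (γξ + 1) * c ^ 2) := by
    simp [mink_add_left, mink_add_right, mink_smul_left, mink_smul_right, hσξ, hσ, hωσ, hξσ]
    ring
  have h3 : mink (γω • (ω + σ)) σ = γω * c ^ 2 := by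
    simp [mink_add_left, mink_smul_left, hωσ, hσ]
  have hμ' : La c σ (γξ • (ξ + σ)) (γω • (ω + σ)) =
      γω • ω + (γω * γξ * (1 - γξ * mink ω ξ / ((γξ + 1) * c ^ 2))) • ξ +
        (γω * γξ * (1 - mink ω ξ / c ^ 2)) • σ := by
    rw [La, h1, h2, h3]
    match_scalars
    · ring
    · field_simp
      ring
    · field_simp
      ring
  rw [hμ']
  have hM : mink (γω • ω + (γω * γξ * (1 - γξ * mink ω ξ / ((γξ + 1) * c ^ 2))) • ξ +
        (γω * γξ * (1 - mink ω ξ / c ^ 2)) • σ) σ =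
      γω * γξ * (1 - mink ω ξ / c ^ 2) * c ^ 2 := by
    simp [mink_add_left, mink_smul_left, hωσ, hξσ, hσ]
  rw [hM]
  match_scalars
  · field_simp [hγωne, hγξne, hcd]
    linear_combination (-1) * hg2
  · field_simp [hγωne, hγξne, hcd]
    ring
  · field_simp [hγωne, hγξne, hcd]
    ring
end
end

section
/- For all u, v ∈ ℝ³ with |u| < c and |v| < c, Ungar's formula equals the Urbantke–Celakoska formula for the 3D ternary relative velocity: ((γ_u + γ_v)/(γ_u·γ_v·(1 − u·v/c²) + γ_u² + γ_v² − 1))·(γ_u·u − γ_v·v) = (2(γ_u + γ_v)/((γ_u + γ_v)² + |γ_u·u − γ_v·v|²/c²))·(γ_u·u − γ_v·v). -/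
noncomputable section
open scoped RealInnerProductSpace

lemma gamma_sq (c : ℝ) (hc : 0 < c) (x : ℝ) (hx0 : 0 ≤ x) (hx : x < c)
    (γ : ℝ) (hγ : γ = 1 / Real.sqrt (1 - x ^ 2 / c ^ 2)) :
    γ ^ 2 * x ^ 2 / c ^ 2 = γ ^ 2 - 1 := by
  have hpos : 0 < 1 - x ^ 2 / c ^ 2 := by
    have h1 : x ^ 2 < c ^ 2 := by nlinarith
    have hc2 : (0:ℝ) < c ^ 2 := by positivity
    rw [sub_pos, div_lt_one hc2]; exact h1
  have hs : Real.sqrt (1 - x ^ 2 / c ^ 2) ^ 2 = 1 - x ^ 2 / c ^ 2 :=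
    Real.sq_sqrt hpos.le
  have hγ2 : γ ^ 2 = 1 / (1 - x ^ 2 / c ^ 2) := by
    rw [hγ, div_pow, one_pow, hs]
  have hne : (1 - x ^ 2 / c ^ 2) ≠ 0 := ne_of_gt hpos
  have hc2 : (c:ℝ) ^ 2 ≠ 0 := by positivity
  have h1 : γ ^ 2 * (1 - x ^ 2 / c ^ 2) = 1 := by
    rw [hγ2, one_div_mul_cancel hne]
  field_simp at h1 ⊢
  linarith [h1]

theorem ungar_eq_urbantke (c : ℝ) (hc : 0 < c) (u v : EuclideanSpace ℝ (Fin 3))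
    (hu : ‖u‖ < c) (hv : ‖v‖ < c) (γu γv : ℝ)
    (hγu : γu = 1 / Real.sqrt (1 - ‖u‖ ^ 2 / c ^ 2))
    (hγv : γv = 1 / Real.sqrt (1 - ‖v‖ ^ 2 / c ^ 2)) :
    ((γu + γv) / (γu * γv * (1 - ⟪u, v⟫ / c ^ 2) + γu ^ 2 + γv ^ 2 - 1)) •
        (γu • u - γv • v) =
      (2 * (γu + γv) / ((γu + γv) ^ 2 + ‖γu • u - γv • v‖ ^ 2 / c ^ 2)) •
        (γu • u - γv • v) := by
  have hgu := gamma_sq c hc ‖u‖ (norm_nonneg u) hu γu hγu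
  have hgv := gamma_sq c hc ‖v‖ (norm_nonneg v) hv γv hγv
  have hnorm : ‖γu • u - γv • v‖ ^ 2 =
      γu ^ 2 * ‖u‖ ^ 2 - 2 * (γu * γv * ⟪u, v⟫) + γv ^ 2 * ‖v‖ ^ 2 := by
    rw [norm_sub_sq_real, norm_smul, norm_smul, real_inner_smul_left,
      real_inner_smul_right]
    simp [mul_pow, Real.norm_eq_abs, sq_abs]
    ring
  have hc2 : (c:ℝ) ^ 2 ≠ 0 := by positivity
  have hden : (γu + γv) ^ 2 + ‖γu • u - γv • v‖ ^ 2 / c ^ 2 =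
      2 * (γu * γv * (1 - ⟪u, v⟫ / c ^ 2) + γu ^ 2 + γv ^ 2 - 1) := by
    rw [hnorm]
    field_simp at hgu hgv ⊢
    linear_combination hgu + hgv
  rw [hden]
  congr 1
  rw [mul_div_mul_left _ _ (two_ne_zero)]
end
end

section
/- For all u, v ∈ ℝ³ with |u| < c and |v| < c, Dragan's formula equals Ungar's formula for the 3D ternary relative velocity: ((γ_u⁻¹ + γ_v⁻¹)/(1 − u·v/c² + γ_u·γ_v·(1 − |u|²|v|²/c⁴)))·(γ_u·u − γ_v·v) = ((γ_u + γ_v)/(γ_u·γ_v·(1 − u·v/c²) + γ_u² + γ_v² − 1))·(γ_u·u − γ_v·v). -/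
noncomputable section
open scoped RealInnerProductSpace

theorem dragan_eq_ungar (c : ℝ) (hc : 0 < c) (u v : EuclideanSpace ℝ (Fin 3))
    (hu : ‖u‖ < c) (hv : ‖v‖ < c) (γu γv : ℝ)
    (hγu : γu = 1 / Real.sqrt (1 - ‖u‖ ^ 2 / c ^ 2))
    (hγv : γv = 1 / Real.sqrt (1 - ‖v‖ ^ 2 / c ^ 2)) :
    ((γu⁻¹ + γv⁻¹) /
        (1 - ⟪u, v⟫ / c ^ 2 + γu * γv * (1 - ‖u‖ ^ 2 * ‖v‖ ^ 2 / c ^ 4))) •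
        (γu • u - γv • v) =
      ((γu + γv) / (γu * γv * (1 - ⟪u, v⟫ / c ^ 2) + γu ^ 2 + γv ^ 2 - 1)) •
        (γu • u - γv • v) := by
  have hc2 : (0:ℝ) < c ^ 2 := by positivity
  have hAu : (0:ℝ) < 1 - ‖u‖ ^ 2 / c ^ 2 := by
    rw [sub_pos, div_lt_one hc2]
    exact pow_lt_pow_left₀ hu (norm_nonneg u) (by norm_num)
  have hAv : (0:ℝ) < 1 - ‖v‖ ^ 2 / c ^ 2 := by
    rw [sub_pos, div_lt_one hc2]
    exact pow_lt_pow_left₀ hv (norm_nonneg v) (by norm_num)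
  have hγu0 : 0 < γu := by rw [hγu]; positivity
  have hγv0 : 0 < γv := by rw [hγv]; positivity
  have hu2 : γu ^ 2 * (1 - ‖u‖ ^ 2 / c ^ 2) = 1 := by
    rw [hγu, div_pow, one_pow, Real.sq_sqrt hAu.le, one_div,
      inv_mul_cancel₀ hAu.ne']
  have hv2 : γv ^ 2 * (1 - ‖v‖ ^ 2 / c ^ 2) = 1 := by
    rw [hγv, div_pow, one_pow, Real.sq_sqrt hAv.le, one_div,
      inv_mul_cancel₀ hAv.ne']
  have hPu : ‖u‖ ^ 2 = c ^ 2 * (1 - 1 / γu ^ 2) := by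
    field_simp at hu2 ⊢
    nlinarith [hu2]
  have hPv : ‖v‖ ^ 2 = c ^ 2 * (1 - 1 / γv ^ 2) := by
    field_simp at hv2 ⊢
    nlinarith [hv2]
  congr 1
  have hnum : γu + γv = γu * γv * (γu⁻¹ + γv⁻¹) := by
    field_simp; ring
  have hden : γu * γv * (1 - ⟪u, v⟫ / c ^ 2) + γu ^ 2 + γv ^ 2 - 1 =
      γu * γv * (1 - ⟪u, v⟫ / c ^ 2 + γu * γv * (1 - ‖u‖ ^ 2 * ‖v‖ ^ 2 / c ^ 4)) := by
    rw [hPu, hPv]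
    field_simp
    ring
  rw [hnum, hden, mul_div_mul_left _ _ (by positivity : γu * γv ≠ 0)]
end
end

section
/- Let W ∈ ℝ³ with 0 ≤ |W| < c, and set γ_W := 1/√(1 − |W|²/c²). Let r, r' ∈ ℝ³ and t, t' ∈ ℝ with t + t' ≠ 0 be related by the passive Lorentz boost with velocity W, i.e. r' = r − γ_W·t·W + (γ_W²/(γ_W + 1))·((r·W)/c²)·W and t' = γ_W·(t − (W·r)/c²). Then W = (1 + γ_W⁻¹)·(r − r')/(t + t'). -/
noncomputable section
open scoped RealInnerProductSpace

theorem boost_velocity_from_positions (c : ℝ) (hc : 0 < c)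
    (W : EuclideanSpace ℝ (Fin 3)) (hW : ‖W‖ < c) (γW : ℝ)
    (hγW : γW = 1 / Real.sqrt (1 - ‖W‖ ^ 2 / c ^ 2))
    (r r' : EuclideanSpace ℝ (Fin 3)) (t t' : ℝ) (ht : t + t' ≠ 0)
    (hr' : r' = r - (γW * t) • W + (γW ^ 2 / (γW + 1)) • ((⟪r, W⟫ / c ^ 2) • W))
    (ht' : t' = γW * (t - ⟪W, r⟫ / c ^ 2)) :
    W = (1 + γW⁻¹) • ((t + t')⁻¹ • (r - r')) := by
  have h1 : 0 < 1 - ‖W‖ ^ 2 / c ^ 2 := by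
    have h2 : ‖W‖ ^ 2 < c ^ 2 := by
      have := norm_nonneg W
      nlinarith
    have : ‖W‖ ^ 2 / c ^ 2 < 1 := by
      rw [div_lt_one (by positivity)]; exact h2
    linarith
  have hγpos : 0 < γW := by
    rw [hγW]
    positivity
  have hγ0 : γW ≠ 0 := ne_of_gt hγpos
  have hγ1 : γW + 1 ≠ 0 := by positivity
  have hcomm : ⟪W, r⟫ = ⟪r, W⟫ := real_inner_comm r W
  subst hr' ht'
  rw [hcomm] at ht ⊢
  set s : ℝ := ⟪r, W⟫ / c ^ 2 with hs
  have hdiff : r - (r - (γW * t) • W + (γW ^ 2 / (γW + 1)) • (s • W))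
      = (γW * t - γW ^ 2 / (γW + 1) * s) • W := by
    rw [smul_smul, sub_smul]
    abel
  rw [hdiff, smul_smul, smul_smul]
  have hcoef : (1 + γW⁻¹) * ((t + γW * (t - s))⁻¹ * (γW * t - γW ^ 2 / (γW + 1) * s)) = 1 := by
    field_simp
    ring
  rw [mul_assoc, hcoef, one_smul]
end
end

section
/- Let W ∈ ℝ³ with 0 ≤ |W| < c, and set γ_W := 1/√(1 − |W|²/c²). Let r, r' ∈ ℝ³ and t, t' ∈ ℝ with t + t' ≠ 0 be related by the passive Lorentz boost with velocity W, i.e. r' = r − γ_W·t·W + (γ_W²/(γ_W + 1))·((r·W)/c²)·W and t' = γ_W·(t − (W·r)/c²). Then Urbantke's formula recovers the boost velocity: W = (2/(1 + |(r − r')/(t + t')|²/c²))·(r − r')/(t + t'). -/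
noncomputable section
open scoped RealInnerProductSpace

theorem urbantke_formula (c : ℝ) (hc : 0 < c)
    (W : EuclideanSpace ℝ (Fin 3)) (hW : ‖W‖ < c) (γW : ℝ)
    (hγW : γW = 1 / Real.sqrt (1 - ‖W‖ ^ 2 / c ^ 2))
    (r r' : EuclideanSpace ℝ (Fin 3)) (t t' : ℝ) (ht : t + t' ≠ 0)
    (hr' : r' = r - (γW * t) • W + (γW ^ 2 / (γW + 1)) • ((⟪r, W⟫ / c ^ 2) • W))
    (ht' : t' = γW * (t - ⟪W, r⟫ / c ^ 2)) :
    W = (2 / (1 + ‖(t + t')⁻¹ • (r - r')‖ ^ 2 / c ^ 2)) •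
        ((t + t')⁻¹ • (r - r')) := by
  have hWn : 0 ≤ ‖W‖ := norm_nonneg W
  have hw2 : ‖W‖ ^ 2 < c ^ 2 := by nlinarith
  have h1 : 0 < 1 - ‖W‖ ^ 2 / c ^ 2 := by
    have : (0:ℝ) < c ^ 2 := by positivity
    rw [sub_pos, div_lt_one this]; exact hw2
  have hs : 0 < Real.sqrt (1 - ‖W‖ ^ 2 / c ^ 2) := Real.sqrt_pos.mpr h1
  have hγpos : 0 < γW := by rw [hγW]; positivity
  have hγsq : γW ^ 2 * (1 - ‖W‖ ^ 2 / c ^ 2) = 1 := by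
    rw [hγW]
    rw [div_pow, one_pow, Real.sq_sqrt h1.le]
    field_simp
    exact div_self (sub_pos.mpr hw2).ne'
  have hγ1 : γW + 1 ≠ 0 := by positivity
  have ha : ⟪W, r⟫ = ⟪r, W⟫ := real_inner_comm r W
  set a : ℝ := ⟪r, W⟫ / c ^ 2 with hadef
  clear_value a
  have hdiff : r - r' = ((γW / (γW + 1)) * (t + t')) • W := by
    rw [hr']
    have : r - (r - (γW * t) • W + (γW ^ 2 / (γW + 1)) • (a • W))
        = (γW * t - γW ^ 2 / (γW + 1) * a) • W := by
      rw [smul_smul, sub_smul]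
      abel
    rw [this]
    congr 1
    rw [ht', ha, ← hadef]
    field_simp
    ring
  have hu : (t + t')⁻¹ • ((γW / (γW + 1) * (t + t')) • W) = (γW / (γW + 1)) • W := by
    rw [smul_smul]
    congr 1
    field_simp
  rw [hdiff, hu, norm_smul, mul_pow, smul_smul]
  have hcoef : 2 / (1 + ‖γW / (γW + 1)‖ ^ 2 * ‖W‖ ^ 2 / c ^ 2) * (γW / (γW + 1)) = 1 := by
    rw [Real.norm_eq_abs, sq_abs]
    have hc2 : (c:ℝ) ^ 2 ≠ 0 := by positivity
    have key : γW ^ 2 * ‖W‖ ^ 2 / c ^ 2 = γW ^ 2 - 1 := by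
      field_simp at hγsq ⊢
      nlinarith [hγsq]
    have hden : 1 + (γW / (γW + 1)) ^ 2 * ‖W‖ ^ 2 / c ^ 2 = 2 * γW / (γW + 1) := by
      have : (γW / (γW + 1)) ^ 2 * ‖W‖ ^ 2 / c ^ 2
          = (γW ^ 2 * ‖W‖ ^ 2 / c ^ 2) / (γW + 1) ^ 2 := by
        rw [div_pow]; ring
      rw [this, key]
      field_simp
      ring
    rw [hden]
    field_simp
  rw [hcoef, one_smul]
end
end

section
/- Let ν, μ be Minkowski velocities with ⟨ν,μ⟩ > 0. Then the invariant Lorentz–Oziewicz gamma factor of the canonical binary relative velocity satisfies ⟨ν,μ⟩/c² = 1/√(1 + ⟨ω(ν,μ),ω(ν,μ)⟩/c²), and consequently the second Minkowski velocity is recovered from the first and the binary velocity by μ = (ω(ν,μ) + ν)/√(1 + ⟨ω(ν,μ),ω(ν,μ)⟩/c²). -/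
noncomputable section

theorem gamma_factor_and_recovery (c : ℝ) (hc : 0 < c) (ν μ : Fin 4 → ℝ)
    (hν : mink ν ν = c ^ 2) (hμ : mink μ μ = c ^ 2) (hνμ : 0 < mink ν μ) :
    mink ν μ / c ^ 2 =
        1 / Real.sqrt (1 + mink (omegaBin c ν μ) (omegaBin c ν μ) / c ^ 2) ∧
      μ = (Real.sqrt (1 + mink (omegaBin c ν μ) (omegaBin c ν μ) / c ^ 2))⁻¹ •
          (omegaBin c ν μ + ν) := by
  have hp : mink ν μ ≠ 0 := ne_of_gt hνμ
  have hc2 : (c : ℝ) ^ 2 ≠ 0 := by positivity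
  have hω : mink (omegaBin c ν μ) (omegaBin c ν μ) =
      c ^ 6 / (mink ν μ) ^ 2 - c ^ 2 := by
    have hexp : ∀ a : ℝ, mink (a • μ - ν) (a • μ - ν)
        = a ^ 2 * mink μ μ - 2 * a * mink ν μ + mink ν ν := by
      intro a
      simp only [mink, Pi.sub_apply, Pi.smul_apply, smul_eq_mul]
      ring
    rw [omegaBin, hexp, hμ, hν]
    field_simp
    ring
  have harg : 1 + mink (omegaBin c ν μ) (omegaBin c ν μ) / c ^ 2 =
      (c ^ 2 / mink ν μ) ^ 2 := by
    rw [hω]; field_simp; ring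
  have hsqrt : Real.sqrt (1 + mink (omegaBin c ν μ) (omegaBin c ν μ) / c ^ 2) =
      c ^ 2 / mink ν μ := by
    rw [harg, Real.sqrt_sq (by positivity)]
  constructor
  · rw [hsqrt]; field_simp
  · rw [hsqrt]
    have : omegaBin c ν μ + ν = (c ^ 2 / mink ν μ) • μ := by
      simp [omegaBin]
    rw [this, smul_smul]
    rw [inv_div, div_mul_div_comm, mul_comm (mink ν μ), div_self (by positivity)]
    simp
end
end

section
/- Let σ, ν, μ be Minkowski velocities and suppose the quantity D := c² − ⟨ν,μ⟩ + 2⟨σ,ν⟩⟨σ,μ⟩/c² is nonzero. Define the Oziewicz–Minkowski inverse velocity ζ := ((⟨σ,ν⟩ + ⟨σ,μ⟩)/D)·(μ − ν) − ((c² − ⟨ν,μ⟩ − 2⟨σ,ν⟩²/c²)/D)·σ, and assume ⟨σ,ζ+σ⟩ ≠ 0. Then the active covariant Lorentz boost with parameter ζ carries ν to μ: La(σ,ζ)ν = μ. -/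
noncomputable section

lemma mink_comb (x u v w : Fin 4 → ℝ) (r s : ℝ) :
    mink x (r • (u - v) - s • w) = r * mink x u - r * mink x v - s * mink x w := by
  unfold mink
  simp [Pi.smul_apply, Pi.sub_apply, smul_eq_mul]
  ring

theorem oziewicz_minkowski_inverse_velocity (c : ℝ) (hc : 0 < c)
    (σ ν μ : Fin 4 → ℝ)
    (hσ : mink σ σ = c ^ 2) (hν : mink ν ν = c ^ 2) (hμ : mink μ μ = c ^ 2)
    (D : ℝ) (hD : D = c ^ 2 - mink ν μ + 2 * mink σ ν * mink σ μ / c ^ 2)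
    (hD0 : D ≠ 0)
    (ζ : Fin 4 → ℝ)
    (hζ : ζ = ((mink σ ν + mink σ μ) / D) • (μ - ν) -
        ((c ^ 2 - mink ν μ - 2 * (mink σ ν) ^ 2 / c ^ 2) / D) • σ)
    (hσζσ : mink σ (ζ + σ) ≠ 0) :
    La c σ ζ ν = μ := by
  have hc2 : (c : ℝ) ^ 2 ≠ 0 := pow_ne_zero _ hc.ne'
  set a := mink σ ν with ha
  set b := mink σ μ with hb
  set m := mink ν μ with hm
  set p : ℝ := (a + b) / D with hp
  set q : ℝ := (c ^ 2 - m - 2 * a ^ 2 / c ^ 2) / D with hq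
  have hνσ : mink ν σ = a := mink_comm ν σ
  have hσμ : mink σ μ = b := rfl
  have hσζ : mink σ ζ = p * b - p * a - q * c ^ 2 := by
    rw [hζ, mink_comb, hσ]
  have hνζ : mink ν ζ = p * m - p * c ^ 2 - q * a := by
    rw [hζ, mink_comb, hν, hνσ]
  have hS : mink σ (ζ + σ) = p * b - p * a - q * c ^ 2 + c ^ 2 := by
    have : mink σ (ζ + σ) = mink σ ζ + mink σ σ := by
      unfold mink; simp [Pi.add_apply]; ring
    rw [this, hσζ, hσ]
  have hN : mink ν (ζ + σ) = p * m - p * c ^ 2 - q * a + a := by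
    have : mink ν (ζ + σ) = mink ν ζ + mink ν σ := by
      unfold mink; simp [Pi.add_apply]; ring
    rw [this, hνζ, hνσ]
  have hcd : c ^ 2 * D = c ^ 4 - c ^ 2 * m + 2 * a * b := by
    rw [hD]; field_simp
  have hS' : mink σ (ζ + σ) = (a + b) ^ 2 / D := by
    rw [hS, hp, hq]
    field_simp
    linear_combination hcd
  have hN' : mink ν (ζ + σ) = (a + b) * (m - c ^ 2 + 2 * a ^ 2 / c ^ 2) / D := by
    rw [hN, hp, hq]
    field_simp
    linear_combination a * hcd
  have hab : a + b ≠ 0 := by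
    intro h
    apply hσζσ
    rw [hS', h]
    simp
  have hk : mink ν (ζ + σ) / mink σ (ζ + σ) = (m - c ^ 2 + 2 * a ^ 2 / c ^ 2) / (a + b) := by
    rw [hS', hN']
    field_simp [hab]
  have key1 : 2 * a / c ^ 2 * p - (m - c ^ 2 + 2 * a ^ 2 / c ^ 2) / (a + b) * p = 1 := by
    rw [hp]
    field_simp [hab]
    linear_combination (-1) * hcd
  have key2 : (m - c ^ 2 + 2 * a ^ 2 / c ^ 2) / (a + b) * (1 - q) + 2 * a / c ^ 2 * q = 0 := by
    rw [hq]
    field_simp [hab]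
    linear_combination (c ^ 2 * m - c ^ 4 + 2 * a ^ 2) * hcd
  funext i
  have hζi : ζ i = p * (μ i - ν i) - q * σ i := by
    rw [hζ]; simp [Pi.smul_apply, Pi.sub_apply, smul_eq_mul]
  have hLa : La c σ ζ ν i = ν i -
      (m - c ^ 2 + 2 * a ^ 2 / c ^ 2) / (a + b) * (ζ i + σ i) +
      2 * a / c ^ 2 * ζ i := by
    simp only [La, Pi.add_apply, Pi.sub_apply, Pi.smul_apply, smul_eq_mul, hνσ, hk]
  rw [hLa, hζi]
  linear_combination (μ i - ν i) * key1 - σ i * key2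
end
end
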